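/- Let F be a field of characteristic zero and q ∈ F nonzero and not a root of unity. If a nonzero rational function f ∈ F(y) satisfies f(q^ℓ y) = c·f(y) for some nonzero integer ℓ and some c ∈ F, then there exists an integer k such that f/y^k ∈ F, and moreover c = q^{ℓk}. -/

import Mathlib

open Polynomial
lemma aux_coeff {F : Type*} [Field F] (lam : F) (p : F[X]) (i : ℕ) :
    (Polynomial.aeval (Polynomial.C lam * Polynomial.X) p).coeff i = lam ^ i * p.coeff i := by
  induction p using Polynomial.induction_on' with
  | add p q hp hq => simp [hp, hq, mul_add]
  | monomial n a =>
      simp only [aeval_monomial, mul_pow, ← C_pow, algebraMap_eq, ← C_mul, coeff_C_mul,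
        coeff_X_pow, coeff_monomial]
      by_cases h : n = i
      · simp [h, mul_comm]
      · simp [if_neg h, if_neg (fun hn : i = n => h hn.symm)]

lemma aux_natDegree {F : Type*} [Field F] {lam : F} (hl : lam ≠ 0) (p : F[X]) :
    (Polynomial.aeval (Polynomial.C lam * Polynomial.X) p).natDegree = p.natDegree := by
  apply le_antisymm
  · rw [natDegree_le_iff_coeff_eq_zero]
    intro m hm
    rw [aux_coeff, coeff_eq_zero_of_natDegree_lt hm, mul_zero]
  · rw [natDegree_le_iff_coeff_eq_zero]
    intro m hm
    have h0 := coeff_eq_zero_of_natDegree_lt hm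
    rw [aux_coeff] at h0
    exact (mul_eq_zero.mp h0).resolve_left (pow_ne_zero m hl)

lemma aux_ne_zero {F : Type*} [Field F] {lam : F} (hl : lam ≠ 0) {p : F[X]} (hp : p ≠ 0) :
    Polynomial.aeval (Polynomial.C lam * Polynomial.X) p ≠ 0 := by
  intro h0
  apply hp
  ext i
  have := aux_coeff lam p i
  rw [h0, coeff_zero] at this
  simpa [pow_ne_zero i hl] using this.symm

lemma aux_zpow_ne_one {F : Type*} [Field F] {q : F} (hq0 : q ≠ 0)
    (hqu : ∀ n : ℕ, 0 < n → q ^ n ≠ 1) : ∀ m : ℤ, m ≠ 0 → q ^ m ≠ 1 := by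
  intro m hm
  rcases lt_or_gt_of_ne hm with hneg | hpos
  · intro h1
    apply hqu (-m).toNat (by omega)
    have : q ^ ((-m).toNat : ℤ) = 1 := by
      rw [Int.toNat_of_nonneg (by omega)]
      rw [zpow_neg, h1, inv_one]
    rwa [zpow_natCast] at this
  · intro h1
    apply hqu m.toNat (by omega)
    rw [← zpow_natCast, Int.toNat_of_nonneg (by omega)]
    exact h1

lemma aux_sigma_pow {F : Type*} [Field F] {q : F} (hq0 : q ≠ 0)
    (σ : RatFunc F ≃ₐ[F] RatFunc F) (hσ : σ RatFunc.X = RatFunc.C q * RatFunc.X) :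
    ∀ m : ℤ, (σ ^ m) RatFunc.X = RatFunc.C (q ^ m) * RatFunc.X := by
  have hC : ∀ a : F, ∀ g : RatFunc F ≃ₐ[F] RatFunc F, g (RatFunc.C a) = RatFunc.C a := by
    intro a g
    rw [← RatFunc.algebraMap_eq_C]
    exact g.commutes a
  have hinv : σ.symm RatFunc.X = RatFunc.C q⁻¹ * RatFunc.X := by
    apply σ.injective
    rw [σ.apply_symm_apply, map_mul, hC, hσ, ← mul_assoc, ← map_mul, inv_mul_cancel₀ hq0,
      map_one, one_mul]
  intro m
  induction m using Int.induction_on with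
  | zero => simp
  | succ k ih =>
      rw [show (k:ℤ)+1 = 1+k by ring, zpow_one_add]
      show σ ((σ ^ (k : ℤ)) RatFunc.X) = _
      rw [ih, map_mul, hC, hσ, ← mul_assoc, ← map_mul, ← zpow_add_one₀ hq0,
        add_comm (1:ℤ) (k:ℤ)]
  | pred k ih =>
      rw [show -(k:ℤ)-1 = -1 + -k by ring, zpow_add, zpow_neg_one]
      show σ.symm ((σ ^ (-(k : ℤ))) RatFunc.X) = _
      rw [ih, map_mul, hC, hinv, ← mul_assoc, ← map_mul]
      rw [show q ^ (-(k:ℤ)) * q⁻¹ = q ^ (-1 + -(k:ℤ)) by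
        rw [← zpow_neg_one, ← zpow_add₀ hq0]; ring_nf]

/-- If a nonzero rational function satisfies `f(q^ℓ y) = c f(y)` for some nonzero
integer `ℓ`, then `f = a · y^k` for some integer `k`, and `c = q^{ℓ k}`. -/
theorem stmt1 (F : Type*) [Field F] [CharZero F] (q : F) (hq0 : q ≠ 0)
    (hqu : ∀ n : ℕ, 0 < n → q ^ n ≠ 1)
    (σ : RatFunc F ≃ₐ[F] RatFunc F) (hσ : σ RatFunc.X = RatFunc.C q * RatFunc.X)
    (f : RatFunc F) (hf : f ≠ 0) (ℓ : ℤ) (hℓ : ℓ ≠ 0) (c : F)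
    (h : (σ ^ ℓ) f = RatFunc.C c * f) :
    ∃ k : ℤ, (∃ a : F, f = RatFunc.C a * RatFunc.X ^ k) ∧ c = q ^ (ℓ * k) := by
  classical
  set lam : F := q ^ ℓ with hlam
  have hlam0 : lam ≠ 0 := zpow_ne_zero ℓ hq0
  have hτX : (σ ^ ℓ) RatFunc.X = RatFunc.C lam * RatFunc.X := aux_sigma_pow hq0 σ hσ ℓ
  set S : F[X] →ₐ[F] F[X] := Polynomial.aeval (Polynomial.C lam * Polynomial.X) with hSdef
  have hmapAH : ((σ ^ ℓ : RatFunc F ≃ₐ[F] RatFunc F) :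
        RatFunc F →ₐ[F] RatFunc F).comp (IsScalarTower.toAlgHom F F[X] (RatFunc F)) =
      (IsScalarTower.toAlgHom F F[X] (RatFunc F)).comp S := by
    apply Polynomial.algHom_ext
    simp only [AlgHom.comp_apply, IsScalarTower.coe_toAlgHom', hSdef, Polynomial.aeval_X]
    rw [RatFunc.algebraMap_X]
    show (σ ^ ℓ) RatFunc.X = _
    rw [hτX, map_mul, RatFunc.algebraMap_C, RatFunc.algebraMap_X]
  have hmap : ∀ a : F[X], (σ ^ ℓ) (algebraMap F[X] (RatFunc F) a)
      = algebraMap F[X] (RatFunc F) (S a) := fun a => AlgHom.congr_fun hmapAH a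
  set p : F[X] := f.num with hpdef
  set r : F[X] := f.denom with hrdef
  have hp0 : p ≠ 0 := RatFunc.num_ne_zero hf
  have hr0 : r ≠ 0 := f.denom_ne_zero
  have hrm0 : algebraMap F[X] (RatFunc F) r ≠ 0 := RatFunc.algebraMap_ne_zero hr0
  have hfe : f * algebraMap F[X] (RatFunc F) r = algebraMap F[X] (RatFunc F) p := by
    conv_lhs => rw [← RatFunc.num_div_denom f]
    rw [div_mul_cancel₀ _ hrm0]
  have h2 : RatFunc.C c * f * algebraMap F[X] (RatFunc F) (S r)
      = algebraMap F[X] (RatFunc F) (S p) := by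
    have := congrArg (σ ^ ℓ) hfe
    rwa [map_mul, h, hmap r, hmap p] at this
  have hE : Polynomial.C c * p * S r = S p * r := by
    apply IsFractionRing.injective F[X] (RatFunc F)
    rw [map_mul, map_mul, map_mul, RatFunc.algebraMap_C]
    calc RatFunc.C c * algebraMap F[X] (RatFunc F) p * algebraMap F[X] (RatFunc F) (S r)
        = RatFunc.C c * f * algebraMap F[X] (RatFunc F) (S r)
          * algebraMap F[X] (RatFunc F) r := by rw [← hfe]; ring
      _ = algebraMap F[X] (RatFunc F) (S p) * algebraMap F[X] (RatFunc F) r := by rw [h2]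
  have hc0 : c ≠ 0 := by
    intro h0
    apply hf
    apply (σ ^ ℓ).injective
    rw [h, h0, map_zero, zero_mul, map_zero]
  have hcop : IsCoprime p r := f.isCoprime_num_denom
  have hSp0 : S p ≠ 0 := aux_ne_zero hlam0 hp0
  have hcopS : IsCoprime (S p) (S r) := by
    have := hcop.map S.toRingHom
    simpa using this
  have hdvd : S p ∣ Polynomial.C c * p := hcopS.dvd_of_dvd_mul_right ⟨r, hE⟩
  obtain ⟨t, ht⟩ := hdvd
  have ht0 : t ≠ 0 := by
    intro h0
    rw [h0, mul_zero] at ht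
    exact (mul_ne_zero (Polynomial.C_ne_zero.mpr hc0) hp0) ht
  have hdeg : t.natDegree = 0 := by
    have := congrArg natDegree ht
    rw [natDegree_mul (Polynomial.C_ne_zero.mpr hc0) hp0, natDegree_mul hSp0 ht0,
      natDegree_C, aux_natDegree hlam0] at this
    omega
  set d : F := t.coeff 0 with hddef
  have hd : t = Polynomial.C d := Polynomial.eq_C_of_natDegree_eq_zero hdeg
  have hd0 : d ≠ 0 := by
    intro h0; rw [h0, Polynomial.C_0] at hd; exact ht0 hd
  have hr : r = Polynomial.C d * S r := by
    have h3 : S p * (Polynomial.C d * S r) = S p * r := by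
      rw [← mul_assoc, ← hd, ← ht, hE]
    exact (mul_left_cancel₀ hSp0 h3).symm
  have hSc : ∀ (g : F[X]) i, (S g).coeff i = lam ^ i * g.coeff i := fun g i => aux_coeff lam g i
  have hrc : ∀ i, r.coeff i ≠ 0 → d * lam ^ i = 1 := by
    intro i hi
    have h4 : r.coeff i = d * (S r).coeff i := by
      conv_lhs => rw [hr]
      rw [coeff_C_mul]
    rw [hSc] at h4
    have h6 : (d * lam ^ i) * r.coeff i = 1 * r.coeff i := by
      rw [one_mul]
      conv_rhs => rw [h4]
      ring
    exact mul_right_cancel₀ hi h6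
  have hpc : ∀ i, p.coeff i ≠ 0 → c = lam ^ i * d := by
    intro i hi
    have h4 : c * p.coeff i = (S p).coeff i * d := by
      have := congrArg (fun u : F[X] => u.coeff i) (ht.trans (by rw [hd]))
      simpa [coeff_C_mul, mul_comm] using this
    rw [hSc] at h4
    have h6 : c * p.coeff i = (lam ^ i * d) * p.coeff i := by rw [h4]; ring
    exact mul_right_cancel₀ hi h6
  have hqpow : ∀ (nn : ℕ), lam ^ nn = q ^ (ℓ * nn) := by
    intro nn
    induction nn with
    | zero => simp
    | succ k ih =>
        rw [pow_succ, ih, hlam, ← zpow_add₀ hq0]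
        congr 1
        push_cast
        ring
  have hlaminj : ∀ i j : ℕ, lam ^ i = lam ^ j → i = j := by
    intro i j hij
    rcases lt_trichotomy i j with hlt | heq | hgt
    · exfalso
      have h7 : lam ^ i * lam ^ (j - i) = lam ^ i * 1 := by
        rw [mul_one, ← pow_add]
        rw [hij]
        congr 1
        omega
      have h8 := mul_left_cancel₀ (pow_ne_zero i hlam0) h7
      rw [hqpow] at h8
      exact aux_zpow_ne_one hq0 hqu (ℓ * ((j - i : ℕ) : ℤ)) (by
        simp only [ne_eq, mul_eq_zero, not_or]
        exact ⟨hℓ, Nat.cast_ne_zero.mpr (by omega)⟩) h8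
    · exact heq
    · exfalso
      have h7 : lam ^ j * lam ^ (i - j) = lam ^ j * 1 := by
        rw [mul_one, ← pow_add]
        rw [← hij]
        congr 1
        omega
      have h8 := mul_left_cancel₀ (pow_ne_zero j hlam0) h7
      rw [hqpow] at h8
      exact aux_zpow_ne_one hq0 hqu (ℓ * ((i - j : ℕ) : ℤ)) (by
        simp only [ne_eq, mul_eq_zero, not_or]
        exact ⟨hℓ, Nat.cast_ne_zero.mpr (by omega)⟩) h8
  set n : ℕ := p.natDegree with hndef
  set m : ℕ := r.natDegree with hmdef
  have hpn : p.coeff n ≠ 0 := by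
    rw [← Polynomial.leadingCoeff]
    exact Polynomial.leadingCoeff_ne_zero.mpr hp0
  have hrm : r.coeff m ≠ 0 := by
    rw [← Polynomial.leadingCoeff]
    exact Polynomial.leadingCoeff_ne_zero.mpr hr0
  have hponly : ∀ i, i ≠ n → p.coeff i = 0 := by
    intro i hi
    by_contra h0
    have e1 := hpc i h0
    have e2 := hpc n hpn
    have : lam ^ i * d = lam ^ n * d := by rw [← e1, ← e2]
    exact hi (hlaminj i n (mul_right_cancel₀ hd0 this))
  have hronly : ∀ i, i ≠ m → r.coeff i = 0 := by
    intro i hi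
    by_contra h0
    have e1 := hrc i h0
    have e2 := hrc m hrm
    have : lam ^ i * d = lam ^ m * d := by
      rw [mul_comm (lam ^ i), mul_comm (lam ^ m), e1, e2]
    exact hi (hlaminj i m (mul_right_cancel₀ hd0 this))
  have hpeq : p = Polynomial.C (p.coeff n) * Polynomial.X ^ n := by
    ext i
    rw [coeff_C_mul, coeff_X_pow]
    by_cases hi : i = n
    · simp [hi]
    · rw [hponly i hi, if_neg hi, mul_zero]
  have hreq : r = Polynomial.C (r.coeff m) * Polynomial.X ^ m := by
    ext i
    rw [coeff_C_mul, coeff_X_pow]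
    by_cases hi : i = m
    · simp [hi]
    · rw [hronly i hi, if_neg hi, mul_zero]
  obtain ⟨a, ha⟩ : ∃ a, p.coeff n = a := ⟨_, rfl⟩
  obtain ⟨b, hb⟩ : ∃ b, r.coeff m = b := ⟨_, rfl⟩
  rw [ha] at hpeq
  rw [hb] at hreq
  refine ⟨(n : ℤ) - m, ⟨a / b, ?_⟩, ?_⟩
  · have hfval : f = (RatFunc.C a * RatFunc.X ^ n)
        / (RatFunc.C b * RatFunc.X ^ m) := by
      conv_lhs => rw [← RatFunc.num_div_denom f,
        show f.num = p from rfl, show f.denom = r from rfl, hpeq, hreq]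
      simp only [map_mul, map_pow, RatFunc.algebraMap_C, RatFunc.algebraMap_X]
    rw [hfval, map_div₀, zpow_sub₀ RatFunc.X_ne_zero, zpow_natCast, zpow_natCast,
      div_mul_div_comm]
  · have e1 := hpc n hpn
    have e2 := hrc m hrm
    have hdval : d = (lam ^ m)⁻¹ := eq_inv_of_mul_eq_one_left (by rw [mul_comm] at e2 ⊢; exact e2)
    rw [e1, hdval, hqpow n, hqpow m, ← zpow_neg, ← zpow_add₀ hq0]
    congr 1
    push_cast
    ring
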